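/- Let S = S(n₁, n₂, …, n_l) be a starlike tree with center c, let D be a dominating set of S, let P_{n_i} be the i-th branch of S with first vertex x₁^i (the vertex of the branch adjacent to c). (b) If n_i ≡ 2 (mod 3), then |D ∩ V(P_{n_i})| ≥ ⌈n_i/3⌉. (c) If n_i ≡ 0 (mod 3), then |D ∩ (V(P_{n_i}) \ {x₁^i})| ≥ ⌈n_i/3⌉ = n_i/3. -/

import Mathlib

open SimpleGraph Finset

/-- `D` is a dominating set of `G`: every vertex is in `D` or adjacent to a vertex of `D`. -/
def SimpleGraph.IsDominatingSet {V : Type*} (G : SimpleGraph V) (D : Set V) : Prop :=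
  ∀ v : V, v ∈ D ∨ ∃ u ∈ D, G.Adj u v

/-- The domination number of a finite graph. -/
noncomputable def SimpleGraph.dominationNumber {V : Type*} [Fintype V]
    (G : SimpleGraph V) : ℕ :=
  sInf {k | ∃ D : Finset V, D.card = k ∧ G.IsDominatingSet ↑D}

/-- The bondage number of a finite graph: the least size of a set of edges whose removal
increases the domination number. -/
noncomputable def SimpleGraph.bondageNumber {V : Type*} [Fintype V]
    (G : SimpleGraph V) : ℕ :=
  sInf {k | ∃ Z : Finset (Sym2 V), Z.card = k ∧ (↑Z : Set (Sym2 V)) ⊆ G.edgeSet ∧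
    G.dominationNumber < (G.deleteEdges ↑Z).dominationNumber}

/-- The strong product of two simple graphs. -/
def SimpleGraph.strongProd {V W : Type*} (G : SimpleGraph V) (H : SimpleGraph W) :
    SimpleGraph (V × W) :=
  SimpleGraph.fromRel (fun a b =>
    (a.1 = b.1 ∧ H.Adj a.2 b.2) ∨ (G.Adj a.1 b.1 ∧ a.2 = b.2) ∨
      (G.Adj a.1 b.1 ∧ H.Adj a.2 b.2))

infixl:70 " ⊠ " => SimpleGraph.strongProd

/-- The starlike tree `S(n₁, …, n_l)`: a center vertex `none` together with `l` disjoint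
paths (the branches), where the `j`-th vertex of the `i`-th branch is `some ⟨i, j⟩` and
the first vertex `some ⟨i, 0⟩` of each branch is adjacent to the center. -/
def starlikeTree (l : ℕ) (nb : Fin l → ℕ) :
    SimpleGraph (Option ((i : Fin l) × Fin (nb i))) :=
  SimpleGraph.fromRel (fun a b =>
    (∃ (i : Fin l) (j : Fin (nb i)), a = none ∧ b = some ⟨i, j⟩ ∧ (j : ℕ) = 0) ∨
    (∃ (i : Fin l) (j k : Fin (nb i)),
      a = some ⟨i, j⟩ ∧ b = some ⟨i, k⟩ ∧ (j : ℕ) + 1 = (k : ℕ)))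

lemma adj_some {l : ℕ} {nb : Fin l → ℕ} {u : Option ((i : Fin l) × Fin (nb i))}
    {i : Fin l} {j : Fin (nb i)}
    (h : (starlikeTree l nb).Adj u (some ⟨i, j⟩)) (hj : (j : ℕ) ≠ 0) :
    ∃ j' : Fin (nb i), u = some ⟨i, j'⟩ ∧ ((j' : ℕ) + 1 = j ∨ (j : ℕ) + 1 = j') := by
  rw [starlikeTree, SimpleGraph.fromRel_adj] at h
  obtain ⟨hne, h | h⟩ := h
  · rcases h with ⟨i', j'', rfl, heq, h0⟩ | ⟨i', j1, k1, rfl, heq, hk⟩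
    · obtain ⟨rfl, hj2⟩ := Sigma.mk.inj_iff.mp (Option.some.inj heq)
      obtain rfl := eq_of_heq hj2
      exact absurd h0 hj
    · obtain ⟨rfl, hj2⟩ := Sigma.mk.inj_iff.mp (Option.some.inj heq)
      obtain rfl := eq_of_heq hj2
      exact ⟨j1, rfl, Or.inl hk⟩
  · rcases h with ⟨i', j'', heq, rfl, h0⟩ | ⟨i', j1, k1, heq, rfl, hk⟩
    · exact absurd heq (by simp)
    · obtain ⟨rfl, hj2⟩ := Sigma.mk.inj_iff.mp (Option.some.inj heq)
      obtain rfl := eq_of_heq hj2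
      exact ⟨k1, rfl, Or.inr hk⟩

/-- **Lemma.** Let `D` be a dominating set of the starlike tree `S(n₁, …, n_l)`, and let
`x₁^i = some ⟨i, 0⟩` be the first vertex of the `i`-th branch `P_{n_i}` (the branch vertex
adjacent to the center).
(b) If `n_i ≡ 2 (mod 3)`, then `|D ∩ V(P_{n_i})| ≥ ⌈n_i/3⌉`.
(c) If `n_i ≡ 0 (mod 3)`, then `|D ∩ (V(P_{n_i}) \ {x₁^i})| ≥ ⌈n_i/3⌉ = n_i/3`. -/
theorem dominating_starlikeTree_branch_mod_two_zero (l : ℕ) (nb : Fin l → ℕ)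
    (hnb : ∀ i, 1 ≤ nb i)
    (D : Finset (Option ((i : Fin l) × Fin (nb i))))
    (hdom : (starlikeTree l nb).IsDominatingSet ↑D) (i : Fin l) :
    (nb i % 3 = 2 →
      (nb i + 2) / 3 ≤ (D.filter (fun x => ∃ j : Fin (nb i), x = some ⟨i, j⟩)).card) ∧
    (nb i % 3 = 0 →
      (nb i + 2) / 3 ≤
        (D.filter (fun x => ∃ j : Fin (nb i), (j : ℕ) ≠ 0 ∧ x = some ⟨i, j⟩)).card ∧
      (nb i + 2) / 3 = nb i / 3) := by
  have key : ∀ t : ℕ, 0 < t → ∀ htn : t < nb i,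
      ∃ j' : Fin (nb i), some ⟨i, j'⟩ ∈ D ∧
        ((j' : ℕ) = t ∨ (j' : ℕ) + 1 = t ∨ t + 1 = (j' : ℕ)) := by
    intro t ht0 htn
    rcases hdom (some ⟨i, ⟨t, htn⟩⟩) with h | ⟨u, hu, hadj⟩
    · exact ⟨⟨t, htn⟩, h, Or.inl rfl⟩
    · obtain ⟨j', rfl, h⟩ := adj_some hadj (by simpa using ht0.ne')
      refine ⟨j', hu, Or.inr ?_⟩
      simpa using h
  constructor
  · intro h2
    have key2 : ∀ k : ℕ, ∃ j' : Fin (nb i), k < (nb i + 2) / 3 →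
        some ⟨i, j'⟩ ∈ D ∧ 3 * k ≤ (j' : ℕ) ∧ (j' : ℕ) ≤ 3 * k + 2 := by
      intro k
      by_cases hk : k < (nb i + 2) / 3
      · obtain ⟨j', hD, hr⟩ := key (3 * k + 1) (by omega) (by omega)
        exact ⟨j', fun _ => ⟨hD, by omega, by omega⟩⟩
      · exact ⟨⟨0, hnb i⟩, fun h => absurd h hk⟩
    choose f hf using key2
    calc (nb i + 2) / 3 = (Finset.range ((nb i + 2) / 3)).card := (Finset.card_range _).symm
    _ ≤ _ := by
      apply Finset.card_le_card_of_injOn (fun k => (some ⟨i, f k⟩ : Option _))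
      · intro k hk
        rw [Finset.coe_range, Set.mem_Iio] at hk
        exact Finset.mem_filter.mpr ⟨(hf k hk).1, f k, rfl⟩
      · intro k1 hk1 k2 hk2 heq
        rw [Finset.coe_range, Set.mem_Iio] at hk1 hk2
        have : f k1 = f k2 := by simpa using heq
        have h1 := (hf k1 hk1).2
        have h2 := (hf k2 hk2).2
        rw [this] at h1
        omega
  · intro h0
    refine ⟨?_, by omega⟩
    have key2 : ∀ k : ℕ, ∃ j' : Fin (nb i), k < (nb i + 2) / 3 →
        some ⟨i, j'⟩ ∈ D ∧ 3 * k + 1 ≤ (j' : ℕ) ∧ (j' : ℕ) ≤ 3 * k + 3 := by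
      intro k
      by_cases hk : k < (nb i + 2) / 3
      · obtain ⟨j', hD, hr⟩ := key (3 * k + 2) (by omega) (by omega)
        exact ⟨j', fun _ => ⟨hD, by omega, by omega⟩⟩
      · exact ⟨⟨0, hnb i⟩, fun h => absurd h hk⟩
    choose f hf using key2
    calc (nb i + 2) / 3 = (Finset.range ((nb i + 2) / 3)).card := (Finset.card_range _).symm
    _ ≤ _ := by
      apply Finset.card_le_card_of_injOn (fun k => (some ⟨i, f k⟩ : Option _))
      · intro k hk
        rw [Finset.coe_range, Set.mem_Iio] at hk
        refine Finset.mem_filter.mpr ⟨(hf k hk).1, f k, ?_, rfl⟩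
        have := (hf k hk).2.1
        omega
      · intro k1 hk1 k2 hk2 heq
        rw [Finset.coe_range, Set.mem_Iio] at hk1 hk2
        have : f k1 = f k2 := by simpa using heq
        have h1 := (hf k1 hk1).2
        have h2 := (hf k2 hk2).2
        rw [this] at h1
        omega
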